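/- Let K be an algebraically closed field. Let R = K[x₁,x₂,x₃,x₄]/(x₁x₄ − x₂x₃), and for λ ∈ K let τ_λ be the K-algebra automorphism of R induced by x₁ ↦ x₁, x₂ ↦ x₂, x₃ ↦ x₃ + λx₁, x₄ ↦ x₄ + λx₂ (this is well defined since x₁(x₄+λx₂) − x₂(x₃+λx₁) = x₁x₄ − x₂x₃). Then the invariant subalgebra {f ∈ R : τ_λ(f) = f for all λ ∈ K} equals the K-subalgebra of R generated by the classes of x₁ and x₂. -/

import Mathlib

open MvPolynomial

section QCAux

variable {K : Type*} [Field K]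

/-- The comparison map `K[x₁,x₂,x₃,x₄] → K[x₁,x₂,t]`, `x₃ ↦ x₁ t`, `x₄ ↦ x₂ t`. -/
noncomputable def qcPsi (K : Type*) [Field K] :
    MvPolynomial (Fin 4) K →ₐ[K] MvPolynomial (Fin 3) K :=
  aeval ![X 0, X 1, X 0 * X 2, X 1 * X 2]

/-- The induced map on exponents. -/
noncomputable def qcPhi (m : Fin 4 →₀ ℕ) : Fin 3 →₀ ℕ :=
  Finsupp.single 0 (m 0 + m 2) + Finsupp.single 1 (m 1 + m 3) +
    Finsupp.single 2 (m 2 + m 3)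

lemma qcPhi_apply0 (m : Fin 4 →₀ ℕ) : qcPhi m 0 = m 0 + m 2 := by
  simp [qcPhi, Finsupp.single_apply]

lemma qcPhi_apply1 (m : Fin 4 →₀ ℕ) : qcPhi m 1 = m 1 + m 3 := by
  simp [qcPhi, Finsupp.single_apply]

lemma qcPhi_apply2 (m : Fin 4 →₀ ℕ) : qcPhi m 2 = m 2 + m 3 := by
  simp [qcPhi, Finsupp.single_apply]

lemma qcPsi_monomial (m : Fin 4 →₀ ℕ) (c : K) :
    qcPsi K (monomial m c) = monomial (qcPhi m) c := by
  rw [qcPsi, aeval_monomial, monomial_eq,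
    Finsupp.prod_fintype _ _ (fun i => pow_zero _),
    Finsupp.prod_fintype _ _ (fun i => pow_zero _),
    Fin.prod_univ_four, Fin.prod_univ_three,
    qcPhi_apply0, qcPhi_apply1, qcPhi_apply2]
  simp only [Matrix.cons_val_zero, Matrix.cons_val_one, Matrix.head_cons,
    Matrix.cons_val_two, Matrix.tail_cons, Matrix.cons_val_three,
    algebraMap_eq]
  ring

/-- "Good" polynomials: normal forms w.r.t. the relation `x₁x₄ = x₂x₃`. -/
def QCGood (F : MvPolynomial (Fin 4) K) : Prop :=
  ∀ m ∈ F.support, m 0 = 0 ∨ m 3 = 0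

lemma qcPhi_inj {m m' : Fin 4 →₀ ℕ} (hm : m 0 = 0 ∨ m 3 = 0)
    (hm' : m' 0 = 0 ∨ m' 3 = 0) (h : qcPhi m = qcPhi m') : m = m' := by
  have h0 : m 0 + m 2 = m' 0 + m' 2 := by
    rw [← qcPhi_apply0, ← qcPhi_apply0, h]
  have h1 : m 1 + m 3 = m' 1 + m' 3 := by
    rw [← qcPhi_apply1, ← qcPhi_apply1, h]
  have h2 : m 2 + m 3 = m' 2 + m' 3 := by
    rw [← qcPhi_apply2, ← qcPhi_apply2, h]
  have e : m 0 = m' 0 ∧ m 1 = m' 1 ∧ m 2 = m' 2 ∧ m 3 = m' 3 := by omega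
  ext i
  fin_cases i
  · exact e.1
  · exact e.2.1
  · exact e.2.2.1
  · exact e.2.2.2

lemma qcGood_eq_zero {F : MvPolynomial (Fin 4) K} (hF : QCGood F)
    (h : qcPsi K F = 0) : F = 0 := by
  by_contra hne
  obtain ⟨m₀, hm₀⟩ := (support_nonempty.mpr hne)
  have hrepr : qcPsi K F
      = ∑ m ∈ F.support, monomial (qcPhi m) (coeff m F) := by
    conv_lhs => rw [← support_sum_monomial_coeff F]
    rw [map_sum]
    exact Finset.sum_congr rfl fun m _ => qcPsi_monomial m _
  have hcoeff : coeff (qcPhi m₀) (qcPsi K F) = coeff m₀ F := by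
    rw [hrepr, coeff_sum]
    rw [Finset.sum_eq_single m₀]
    · simp [coeff_monomial]
    · intro m hm hmne
      rw [coeff_monomial, if_neg]
      intro heq
      exact hmne (qcPhi_inj (hF m hm) (hF m₀ hm₀) heq)
    · intro hnot; exact absurd hm₀ hnot
  rw [h] at hcoeff
  simp only [coeff_zero] at hcoeff
  exact (mem_support_iff.mp hm₀) hcoeff.symm

lemma qc_exists_good_monomial :
    ∀ (n : ℕ) (m : Fin 4 →₀ ℕ), m 0 = n →
      ∃ G : MvPolynomial (Fin 4) K, QCGood G ∧
        (monomial m (1 : K)) - G ∈ Ideal.span {X 0 * X 3 - X 1 * X 2} := by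
  classical
  intro n
  induction n using Nat.strong_induction_on with
  | _ n IH =>
    intro m hmn
    by_cases h0 : m 0 = 0 ∨ m 3 = 0
    · refine ⟨monomial m 1, ?_, by simpa using Ideal.zero_mem _⟩
      intro m' hm'
      rw [support_monomial, if_neg one_ne_zero, Finset.mem_singleton] at hm'
      subst hm'; exact h0
    · push_neg at h0
      obtain ⟨h00, h03⟩ := h0
      set m' : Fin 4 →₀ ℕ := m - Finsupp.single 0 1 - Finsupp.single 3 1 with hm'def
      have hm'app : ∀ i, m' i = m i - (Finsupp.single (0 : Fin 4) 1) i
          - (Finsupp.single (3 : Fin 4) 1) i := by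
        intro i; simp [hm'def, Finsupp.tsub_apply]
      have key1 : Finsupp.single (0 : Fin 4) 1 + Finsupp.single 3 1 + m' = m := by
        ext i
        have := hm'app i
        fin_cases i <;>
          simp_all [Finsupp.single_apply] <;> omega
      set m'' : Fin 4 →₀ ℕ := m' + Finsupp.single 1 1 + Finsupp.single 2 1 with hm''def
      have hmono1 : (monomial m (1 : K)) = X 0 * X 3 * monomial m' 1 := by
        rw [X, X, monomial_mul, monomial_mul, one_mul, one_mul, key1]
      have hmono2 : X 1 * X 2 * monomial m' (1 : K) = monomial m'' 1 := by
        rw [X, X, monomial_mul, monomial_mul, one_mul, one_mul, hm''def]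
        congr 1
        abel
      have hdiff : (monomial m (1 : K)) - monomial m'' 1
          ∈ Ideal.span {X 0 * X 3 - X 1 * X 2} := by
        have : (monomial m (1 : K)) - monomial m'' 1
            = (X 0 * X 3 - X 1 * X 2) * monomial m' 1 := by
          rw [hmono1, ← hmono2]; ring
        rw [this]
        exact Ideal.mul_mem_right _ _ (Ideal.subset_span rfl)
      have h1 : m' 0 = m 0 - 1 := by
        have := hm'app 0; simpa [Finsupp.single_apply] using this
      have h2 : m'' 0 = m' 0 := by
        rw [hm''def]
        simp [Finsupp.single_apply]
      have hm''0 : m'' 0 < n := by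
        rw [h2, h1]; omega
      obtain ⟨G, hG, hGmem⟩ := IH (m'' 0) hm''0 m'' rfl
      refine ⟨G, hG, ?_⟩
      have : (monomial m (1 : K)) - G
          = ((monomial m (1 : K)) - monomial m'' 1) + ((monomial m'' (1 : K)) - G) := by
        ring
      rw [this]
      exact Ideal.add_mem _ hdiff hGmem

lemma qc_exists_good (F : MvPolynomial (Fin 4) K) :
    ∃ G : MvPolynomial (Fin 4) K, QCGood G ∧
      F - G ∈ Ideal.span {X 0 * X 3 - X 1 * X 2} := by
  choose G hGgood hGmem using fun m : Fin 4 →₀ ℕ =>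
    qc_exists_good_monomial (K := K) (m 0) m rfl
  refine ⟨∑ m ∈ F.support, coeff m F • G m, ?_, ?_⟩
  · intro m' hm'
    obtain ⟨m, hm, hm'2⟩ := Finset.mem_biUnion.mp (support_sum hm')
    exact hGgood m m' (support_smul hm'2)
  · have : F - ∑ m ∈ F.support, coeff m F • G m
        = ∑ m ∈ F.support, coeff m F • ((monomial m (1 : K)) - G m) := by
      simp only [smul_sub]
      rw [Finset.sum_sub_distrib]
      congr 1
      conv_lhs => rw [← support_sum_monomial_coeff F]
      refine Finset.sum_congr rfl fun m _ => ?_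
      rw [smul_monomial, smul_eq_mul, mul_one]
    rw [this]
    refine Ideal.sum_mem _ fun m _ => ?_
    rw [smul_eq_C_mul]
    exact Ideal.mul_mem_left _ _ (hGmem m)

lemma qc_aeval_mem_adjoin (p : MvPolynomial (Fin 3) K) :
    aeval ![X 0, X 1, 0] p ∈
      Algebra.adjoin K ({X 0, X 1} : Set (MvPolynomial (Fin 3) K)) := by
  induction p using MvPolynomial.induction_on with
  | C a => rw [aeval_C]; exact Subalgebra.algebraMap_mem _ _
  | add p q hp hq => rw [map_add]; exact add_mem hp hq
  | mul_X p i hp =>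
    rw [map_mul, aeval_X]
    refine mul_mem hp ?_
    fin_cases i
    · exact Algebra.subset_adjoin (Set.mem_insert _ _)
    · exact Algebra.subset_adjoin (Set.mem_insert_of_mem _ rfl)
    · simpa using Subalgebra.zero_mem _

end QCAux

/-- **Invariants of the additive group action on the quadric cone (Section 4).**
Let `K` be algebraically closed, `R = K[x₁,x₂,x₃,x₄]/(x₁x₄ - x₂x₃)` and `τ_λ` the
`K`-algebra endomorphism of `R` induced by `x₁ ↦ x₁`, `x₂ ↦ x₂`, `x₃ ↦ x₃ + λx₁`,
`x₄ ↦ x₄ + λx₂`. An element of `R` is fixed by all `τ_λ` iff it lies in the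
`K`-subalgebra generated by the classes of `x₁` and `x₂`.
(Variables: `X 0 = x₁`, `X 1 = x₂`, `X 2 = x₃`, `X 3 = x₄`.) -/
theorem invariants_of_additive_action_on_quadric_cone
    (K : Type*) [Field K] [IsAlgClosed K]
    (I : Ideal (MvPolynomial (Fin 4) K))
    (hI : I = Ideal.span {X 0 * X 3 - X 1 * X 2})
    (τ : K → ((MvPolynomial (Fin 4) K ⧸ I) →ₐ[K] (MvPolynomial (Fin 4) K ⧸ I)))
    (hτ : ∀ l : K, (τ l).comp (Ideal.Quotient.mkₐ K I) =
      (Ideal.Quotient.mkₐ K I).comp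
        (aeval ![X 0, X 1, X 2 + C l * X 0, X 3 + C l * X 1]))
    (r : MvPolynomial (Fin 4) K ⧸ I) :
    (∀ l : K, τ l r = r) ↔
      r ∈ Algebra.adjoin K
        ({Ideal.Quotient.mkₐ K I (X 0), Ideal.Quotient.mkₐ K I (X 1)} :
          Set (MvPolynomial (Fin 4) K ⧸ I)) := by
  -- the generator of `I` dies under `qcPsi`
  have hgen : qcPsi K (X 0 * X 3 - X 1 * X 2) = 0 := by
    simp only [qcPsi, map_sub, map_mul, aeval_X, Matrix.cons_val_zero,
      Matrix.cons_val_one, Matrix.head_cons, Matrix.cons_val_two,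
      Matrix.tail_cons, Matrix.cons_val_three]
    ring
  have hker : ∀ a ∈ I, qcPsi K a = 0 := by
    intro a ha
    rw [hI] at ha
    have hle : Ideal.span {X 0 * X 3 - X 1 * X 2}
        ≤ RingHom.ker (qcPsi K).toRingHom := by
      rw [Ideal.span_le]
      intro x hx
      rw [Set.mem_singleton_iff] at hx
      subst hx
      exact hgen
    exact hle ha
  -- the induced map on `R`
  set ψ : (MvPolynomial (Fin 4) K ⧸ I) →ₐ[K] MvPolynomial (Fin 3) K :=
    Ideal.Quotient.liftₐ I (qcPsi K) hker with hψdef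
  have hψmk : ∀ F : MvPolynomial (Fin 4) K,
      ψ (Ideal.Quotient.mkₐ K I F) = qcPsi K F := fun F => rfl
  -- injectivity of ψ
  have hinj : Function.Injective ψ := by
    rw [injective_iff_map_eq_zero]
    intro f hf
    obtain ⟨F, rfl⟩ := Ideal.Quotient.mkₐ_surjective K I f
    obtain ⟨G, hGgood, hGmem⟩ := qc_exists_good F
    rw [← hI] at hGmem
    have hf' : qcPsi K F = 0 := by rw [← hψmk F]; exact hf
    have hG0 : qcPsi K G = 0 := by
      have h2 := hker _ hGmem
      rw [map_sub, hf', zero_sub, neg_eq_zero] at h2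
      exact h2
    have hGz : G = 0 := qcGood_eq_zero hGgood hG0
    rw [hGz, sub_zero] at hGmem
    rwa [Ideal.Quotient.mkₐ_eq_mk, Ideal.Quotient.eq_zero_iff_mem]
  -- the translation action on K[x₁,x₂,t]
  set σ : K → (MvPolynomial (Fin 3) K →ₐ[K] MvPolynomial (Fin 3) K) :=
    fun l => aeval ![X 0, X 1, X 2 + C l] with hσdef
  have hcomm : ∀ l, ψ.comp (τ l) = (σ l).comp ψ := by
    intro l
    apply Ideal.Quotient.algHom_ext
    apply MvPolynomial.algHom_ext
    intro i
    have hτi := DFunLike.congr_fun (hτ l) (X i)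
    simp only [AlgHom.comp_apply, Ideal.Quotient.mkₐ_eq_mk] at hτi ⊢
    rw [hτi]
    show qcPsi K _ = (σ l) (qcPsi K (X i))
    fin_cases i <;>
      simp [qcPsi, hσdef, algebraMap_eq] <;> ring
  have haevalmkX0 : ψ (Ideal.Quotient.mkₐ K I (X 0)) = X 0 := by
    rw [hψmk]; simp [qcPsi]
  have haevalmkX1 : ψ (Ideal.Quotient.mkₐ K I (X 1)) = X 1 := by
    rw [hψmk]; simp [qcPsi]
  constructor
  · -- hard direction
    intro hinv
    set P : MvPolynomial (Fin 3) K := ψ r with hPdef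
    have hfix : ∀ l, σ l P = P := by
      intro l
      have := congrArg (fun g : _ →ₐ[K] _ => g r) (hcomm l)
      simp only [AlgHom.comp_apply] at this
      rw [← this, hinv l]
    -- evaluation identity
    have heval : ∀ (x : Fin 3 → K) (f : Fin 3 → MvPolynomial (Fin 3) K)
        (p : MvPolynomial (Fin 3) K),
        eval x (aeval f p) = eval (fun i => eval x (f i)) p := by
      intro x f p
      have h2 : ∀ (g : Fin 3 → K) (q : MvPolynomial (Fin 3) K),
          (aeval g : MvPolynomial (Fin 3) K →ₐ[K] K) q = eval g q := by
        intro g q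
        rw [← coe_aeval_eq_eval]
        rfl
      rw [← h2, comp_aeval_apply]
      simp only [h2]
    have hP : P = aeval ![X 0, X 1, 0] P := by
      apply MvPolynomial.funext
      intro x
      set y : Fin 3 → K := ![x 0, x 1, 0] with hy
      have hxy : (fun i => eval x ((![X 0, X 1, 0] : Fin 3 → MvPolynomial (Fin 3) K) i)) = y := by
        funext i
        fin_cases i <;> simp [hy]
      have hrhs : eval x (aeval ![X 0, X 1, 0] P) = eval y P := by
        rw [heval, hxy]
      have hyx : (fun i => eval y ((![X 0, X 1, X 2 + C (x 2)] : Fin 3 → MvPolynomial (Fin 3) K) i)) = x := by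
        funext i
        fin_cases i <;> simp [hy]
      have hlhs : eval y (σ (x 2) P) = eval x P := by
        rw [hσdef]
        rw [heval, hyx]
      rw [hrhs, ← hlhs, hfix]
    have hPmem : P ∈ Algebra.adjoin K
        ({X 0, X 1} : Set (MvPolynomial (Fin 3) K)) := by
      rw [hP]; exact qc_aeval_mem_adjoin P
    -- pull back along ψ
    have himg : Algebra.adjoin K ({X 0, X 1} : Set (MvPolynomial (Fin 3) K))
        = Subalgebra.map ψ (Algebra.adjoin K
            ({Ideal.Quotient.mkₐ K I (X 0), Ideal.Quotient.mkₐ K I (X 1)} :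
              Set (MvPolynomial (Fin 4) K ⧸ I))) := by
      rw [AlgHom.map_adjoin]
      congr 1
      rw [Set.image_insert_eq, Set.image_singleton, haevalmkX0, haevalmkX1]
    rw [himg] at hPmem
    obtain ⟨g, hg, hgP⟩ := hPmem
    have : g = r := hinj (hgP.trans hPdef)
    rwa [← this]
  · -- easy direction
    intro hr l
    have hgen0 : τ l (Ideal.Quotient.mkₐ K I (X 0)) = Ideal.Quotient.mkₐ K I (X 0) := by
      have := congrArg (fun g : _ →ₐ[K] _ => g (X 0)) (hτ l)
      simpa using this
    have hgen1 : τ l (Ideal.Quotient.mkₐ K I (X 1)) = Ideal.Quotient.mkₐ K I (X 1) := by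
      have := congrArg (fun g : _ →ₐ[K] _ => g (X 1)) (hτ l)
      simpa using this
    induction hr using Algebra.adjoin_induction with
    | mem x hx =>
      rcases hx with hx | hx
      · rw [hx]; exact hgen0
      · rw [Set.mem_singleton_iff] at hx; rw [hx]; exact hgen1
    | algebraMap a => exact (τ l).commutes a
    | add a b _ _ ha hb => rw [map_add, ha, hb]
    | mul a b _ _ ha hb => rw [map_mul, ha, hb]
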